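/- Parallel associativity of graph insertion: let V₁, V₂, V₃ be pairwise disjoint finite sets, let *₁ and *₂ be two distinct distinguished elements of V₁, and let g₁, g₂, g₃ be simple graphs on V₁, V₂, V₃ respectively. Then (g₁ ∘_{*₁} g₂) ∘_{*₂} g₃ = (g₁ ∘_{*₂} g₃) ∘_{*₁} g₂, as elements of the free module on the set of simple graphs on (V₁ \ {*₁, *₂}) ∪ V₂ ∪ V₃, where insertion is extended bilinearly to linear combinations of graphs. (This is one of the operad axioms in the theorem stating that graphs with insertion form an operad.) -/
import Mathlib


/-!
Common framework: a simple graph on a finite vertex set `V ⊆ α` is a finite set of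
unordered pairs (`Sym2 α`) of distinct elements of `V`.  The insertion
`g₁ ∘_star g₂` is an element of the free `ℚ`-module `Finset (Sym2 α) →₀ ℚ`
on the set of edge sets.
-/

open scoped Classical

variable {α : Type*} [DecidableEq α]

/-- The finite edge set `g` is a simple graph on the vertex set `V`. -/
def IsGraphOn (V : Finset α) (g : Finset (Sym2 α)) : Prop :=
  ∀ e ∈ g, ¬ e.IsDiag ∧ ∀ v ∈ e, v ∈ V

/-- The two endpoints of an unordered pair, as a `Finset`. -/
def sym2Finset : Sym2 α → Finset α :=
  Sym2.lift ⟨fun a b => {a, b}, by intro a b; simp [Finset.pair_comm]⟩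

/-- Neighbours of `x` in the edge set `g`. -/
def nbrs (g : Finset (Sym2 α)) (x : α) : Finset α :=
  (g.biUnion sym2Finset).filter fun v => s(x, v) ∈ g

/-- Remove the vertex `x` (and all incident edges) from the edge set `g`. -/
def delG (g : Finset (Sym2 α)) (x : α) : Finset (Sym2 α) :=
  g.filter fun e => x ∉ e

/-- The edges `{v, f v}` obtained from a reconnection map `f : C → V₂`. -/
def newEdges (C V₂ : Finset α) (f : {v // v ∈ C} → {w // w ∈ V₂}) : Finset (Sym2 α) :=
  Finset.univ.image fun v : {v // v ∈ C} => s(v.1, (f v).1)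

/-- Insertion `g₁ ∘_star g₂` of a graph `g₂` on the vertex set `V₂` into a graph `g₁`:
the sum, over all maps `f` from the neighbours of `star` in `g₁` to `V₂`, of the graph
obtained by deleting `star` from `g₁`, adding `g₂`, and reconnecting along `f`. -/
noncomputable def ins (V₂ : Finset α) (star : α) (g₁ g₂ : Finset (Sym2 α)) :
    Finset (Sym2 α) →₀ ℚ :=
  ∑ f : ({v // v ∈ nbrs g₁ star} → {w // w ∈ V₂}),
    Finsupp.single (delG g₁ star ∪ g₂ ∪ newEdges (nbrs g₁ star) V₂ f) 1

/-- Bilinear extension of the insertion to the free module on graphs. -/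
noncomputable def insM (V₂ : Finset α) (star : α) (x y : Finset (Sym2 α) →₀ ℚ) :
    Finset (Sym2 α) →₀ ℚ :=
  x.sum fun g₁ c₁ => y.sum fun g₂ c₂ => (c₁ * c₂) • ins V₂ star g₁ g₂

section Helpers

variable {α : Type*} [DecidableEq α]

lemma mem_nbrs {g : Finset (Sym2 α)} {x v : α} : v ∈ nbrs g x ↔ s(x, v) ∈ g := by
  constructor
  · intro h; exact (Finset.mem_filter.1 h).2
  · intro h
    refine Finset.mem_filter.2 ⟨Finset.mem_biUnion.2 ⟨s(x, v), h, ?_⟩, h⟩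
    simp [sym2Finset]

lemma nbrs_union (s t : Finset (Sym2 α)) (x : α) :
    nbrs (s ∪ t) x = nbrs s x ∪ nbrs t x := by
  ext v; simp [mem_nbrs, Finset.mem_union]

lemma nbrs_eq_empty {g : Finset (Sym2 α)} {x : α} (h : ∀ e ∈ g, x ∉ e) : nbrs g x = ∅ := by
  ext v
  simp only [mem_nbrs, Finset.notMem_empty, iff_false]
  intro hm; exact h _ hm (Sym2.mem_mk_left x v)

lemma delG_eq_self {g : Finset (Sym2 α)} {x : α} (h : ∀ e ∈ g, x ∉ e) : delG g x = g :=
  Finset.filter_true_of_mem h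

lemma delG_union (s t : Finset (Sym2 α)) (x : α) : delG (s ∪ t) x = delG s x ∪ delG t x :=
  Finset.filter_union _ _ _

lemma mem_delG {g : Finset (Sym2 α)} {x : α} {e : Sym2 α} :
    e ∈ delG g x ↔ e ∈ g ∧ x ∉ e := Finset.mem_filter

lemma nbrs_delG {g : Finset (Sym2 α)} {x y : α} (hxy : x ≠ y) :
    nbrs (delG g x) y = (nbrs g y).erase x := by
  ext v
  simp only [mem_nbrs, mem_delG, Finset.mem_erase, Sym2.mem_iff]
  constructor
  · rintro ⟨h1, h2⟩
    exact ⟨fun h => h2 (Or.inr h.symm), h1⟩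
  · rintro ⟨h1, h2⟩
    exact ⟨h2, fun h => h.elim (fun h => hxy h) (fun h => h1 h.symm)⟩

lemma mem_newEdges {C V : Finset α} {f : {v // v ∈ C} → {w // w ∈ V}} {e : Sym2 α} :
    e ∈ newEdges C V f ↔ ∃ v : {v // v ∈ C}, s(v.1, (f v).1) = e := by
  simp [newEdges]

lemma newEdges_notMem {C V : Finset α} (f : {v // v ∈ C} → {w // w ∈ V}) {y : α}
    (hC : y ∉ C) (hV : y ∉ V) : ∀ e ∈ newEdges C V f, y ∉ e := by
  intro e he hy
  obtain ⟨v, rfl⟩ := mem_newEdges.1 he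
  rcases Sym2.mem_iff.1 hy with h | h
  · exact hC (h ▸ v.2)
  · exact hV (h ▸ (f v).2)

lemma nbrs_newEdges_empty {C V : Finset α} (f : {v // v ∈ C} → {w // w ∈ V}) {y : α}
    (hC : y ∉ C) (hV : y ∉ V) : nbrs (newEdges C V f) y = ∅ :=
  nbrs_eq_empty (newEdges_notMem f hC hV)

lemma nbrs_pair {x a : α} (h : x ≠ a) : nbrs ({s(x, a)} : Finset (Sym2 α)) x = {a} := by
  ext v
  simp [mem_nbrs, Sym2.eq_iff, h]

lemma delG_pair_self (x a : α) : delG ({s(x, a)} : Finset (Sym2 α)) x = ∅ := by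
  ext e
  simp only [mem_delG, Finset.mem_singleton, Finset.notMem_empty, iff_false, not_and]
  rintro rfl h
  exact h (Sym2.mem_mk_left x a)

/-- Splitting a function on `insert a s` into its restriction to `s` and its value at `a`. -/
def funSplit {a : α} {s : Finset α} (ha : a ∉ s) (W : Type*) :
    ({v // v ∈ insert a s} → W) ≃ ({v // v ∈ s} → W) × W where
  toFun f := (fun v => f ⟨v.1, Finset.mem_insert_of_mem v.2⟩, f ⟨a, Finset.mem_insert_self a s⟩)
  invFun p := fun v => if h : v.1 ∈ s then p.1 ⟨v.1, h⟩ else p.2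
  left_inv f := by
    funext v
    by_cases h : v.1 ∈ s
    · simp only [dif_pos h]
    · simp only [dif_neg h]
      have hv : v = ⟨a, Finset.mem_insert_self a s⟩ :=
        Subtype.ext ((Finset.mem_insert.1 v.2).resolve_right h)
      rw [hv]
  right_inv p := by
    refine Prod.ext ?_ ?_
    · funext v
      simp only [dif_pos v.2]
    · simp only [dif_neg ha]

lemma funSplit_symm_newEdges {a : α} {s : Finset α} (ha : a ∉ s) {V : Finset α}
    (p : ({v // v ∈ s} → {w // w ∈ V}) × {w // w ∈ V}) :
    newEdges (insert a s) V ((funSplit ha _).symm p)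
      = insert s(a, p.2.1) (newEdges s V p.1) := by
  ext e
  simp only [mem_newEdges, Finset.mem_insert]
  constructor
  · rintro ⟨v, rfl⟩
    by_cases h : v.1 ∈ s
    · right
      exact ⟨⟨v.1, h⟩, by simp [funSplit, dif_pos h]⟩
    · left
      have hv : v.1 = a := (Finset.mem_insert.1 v.2).resolve_right h
      simp [funSplit, dif_neg h, hv, dif_neg ha]
  · rintro (h | ⟨v, rfl⟩)
    · exact ⟨⟨a, Finset.mem_insert_self a s⟩, by simp [funSplit, dif_neg ha, h.symm]⟩
    · exact ⟨⟨v.1, Finset.mem_insert_of_mem v.2⟩, by simp [funSplit, dif_pos v.2]⟩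

lemma newEdges_insert {a : α} {s : Finset α} (ha : a ∉ s) {V : Finset α}
    (f : {v // v ∈ insert a s} → {w // w ∈ V}) :
    newEdges (insert a s) V f
      = insert s(a, ((funSplit ha _) f).2.1) (newEdges s V ((funSplit ha _) f).1) := by
  conv_lhs => rw [← Equiv.symm_apply_apply (funSplit ha _) f]
  rw [funSplit_symm_newEdges]

lemma sum_insert_reindex {a : α} {s : Finset α} (ha : a ∉ s) (V : Finset α)
    (F : Finset (Sym2 α) → (Finset (Sym2 α) →₀ ℚ)) :
    (∑ f : ({v // v ∈ insert a s} → {w // w ∈ V}), F (newEdges (insert a s) V f))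
      = ∑ p : ({v // v ∈ s} → {w // w ∈ V}) × {w // w ∈ V},
          F (insert s(a, p.2.1) (newEdges s V p.1)) := by
  refine Fintype.sum_equiv (funSplit ha _) _ _ fun f => ?_
  rw [newEdges_insert ha f]

lemma ins_congr {V : Finset α} {x : α} {g h : Finset (Sym2 α)} {C : Finset α}
    (hC : nbrs g x = C) :
    ins V x g h = ∑ f : ({v // v ∈ C} → {w // w ∈ V}),
      Finsupp.single (delG g x ∪ h ∪ newEdges C V f) 1 := by
  subst hC; rfl

lemma insM_single_single (V : Finset α) (x : α) (g h : Finset (Sym2 α)) :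
    insM V x (Finsupp.single g 1) (Finsupp.single h 1) = ins V x g h := by
  unfold insM
  rw [Finsupp.sum_single_index (by simp [Finsupp.sum])]
  rw [Finsupp.sum_single_index (by simp)]
  simp

lemma insM_ins (V' : Finset α) (y : α) (V : Finset α) (x : α) (g h k : Finset (Sym2 α)) :
    insM V' y (ins V x g h) (Finsupp.single k 1)
      = ∑ f : ({v // v ∈ nbrs g x} → {w // w ∈ V}),
          ins V' y (delG g x ∪ h ∪ newEdges (nbrs g x) V f) k := by
  have h1 : insM V' y (ins V x g h) (Finsupp.single k 1)
      = (ins V x g h).sum fun g' c => c • ins V' y g' k := by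
    unfold insM
    refine Finsupp.sum_congr fun g' _ => ?_
    rw [Finsupp.sum_single_index (by simp), mul_one]
  rw [h1]
  unfold ins
  rw [← Finsupp.sum_finset_sum_index (by simp) (fun a b₁ b₂ => add_smul b₁ b₂ _)]
  refine Finset.sum_congr rfl fun f _ => ?_
  rw [Finsupp.sum_single_index (by simp), one_smul]

end Helpers
section Key

variable {α : Type*} [DecidableEq α]

lemma delG_comm (g : Finset (Sym2 α)) (x y : α) :
    delG (delG g x) y = delG (delG g y) x := by
  ext e; simp only [mem_delG]; tauto

lemma union_shuffle {β : Type*} [DecidableEq β] (a b c d e f : Finset β) :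
    ((a ∪ b) ∪ (∅ ∪ c)) ∪ d ∪ (e ∪ f) = a ∪ b ∪ d ∪ c ∪ f ∪ e := by
  ext x; simp only [Finset.mem_union, Finset.notMem_empty, false_or]; tauto

lemma union_shuffle₂ {β : Type*} [DecidableEq β] (a b c d e f : Finset β) :
    a ∪ b ∪ c ∪ d ∪ e ∪ f = a ∪ c ∪ b ∪ e ∪ d ∪ f := by
  ext x; simp only [Finset.mem_union]; tauto

lemma union_shuffle₃ {β : Type*} [DecidableEq β] (a b c d e : Finset β) :
    a ∪ b ∪ c ∪ d ∪ e = a ∪ c ∪ b ∪ e ∪ d := by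
  ext x; simp only [Finset.mem_union]; tauto

lemma key_noedge (V V' : Finset α) (x y : α) (g h k : Finset (Sym2 α))
    (hxy : x ≠ y) (hyV : y ∉ V)
    (hhy : ∀ e ∈ h, y ∉ e)
    (hmem : s(x, y) ∉ g) :
    insM V' y (insM V x (Finsupp.single g 1) (Finsupp.single h 1)) (Finsupp.single k 1)
      = ∑ f : ({v // v ∈ nbrs g x} → {w // w ∈ V}),
          ∑ f' : ({v // v ∈ nbrs g y} → {w // w ∈ V'}),
            Finsupp.single (delG (delG g x) y ∪ h ∪ k ∪ newEdges (nbrs g x) V f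
              ∪ newEdges (nbrs g y) V' f') 1 := by
  have hyNx : y ∉ nbrs g x := fun hy => hmem (mem_nbrs.1 hy)
  have hxNy : x ∉ nbrs g y := fun hx => hmem (by rw [Sym2.eq_swap]; exact mem_nbrs.1 hx)
  rw [insM_single_single, insM_ins]
  refine Finset.sum_congr rfl fun f _ => ?_
  have hGn : nbrs (delG g x ∪ h ∪ newEdges (nbrs g x) V f) y = nbrs g y := by
    rw [nbrs_union, nbrs_union, nbrs_delG hxy, nbrs_eq_empty hhy,
      nbrs_newEdges_empty f hyNx hyV, Finset.union_empty, Finset.union_empty,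
      Finset.erase_eq_of_notMem hxNy]
  rw [ins_congr hGn]
  refine Finset.sum_congr rfl fun f' _ => ?_
  congr 1
  rw [delG_union, delG_union, delG_eq_self hhy,
    delG_eq_self (newEdges_notMem f hyNx hyV),
    Finset.union_right_comm (delG (delG g x) y ∪ h) (newEdges (nbrs g x) V f) k]

lemma key_edge (V V' : Finset α) (x y : α) (g h k : Finset (Sym2 α))
    (hxy : x ≠ y) (hyV : y ∉ V)
    (hVNy : ∀ a ∈ V, a ∉ nbrs g y)
    (hhy : ∀ e ∈ h, y ∉ e)
    (hmem : s(x, y) ∈ g) :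
    insM V' y (insM V x (Finsupp.single g 1) (Finsupp.single h 1)) (Finsupp.single k 1)
      = ∑ p : ({v // v ∈ (nbrs g x).erase y} → {w // w ∈ V}) × {w // w ∈ V},
          ∑ q : ({v // v ∈ (nbrs g y).erase x} → {w // w ∈ V'}) × {w // w ∈ V'},
            Finsupp.single (delG (delG g x) y ∪ h ∪ k
              ∪ newEdges ((nbrs g x).erase y) V p.1
              ∪ newEdges ((nbrs g y).erase x) V' q.1
              ∪ {s(p.2.1, q.2.1)}) 1 := by
  have hyNx : y ∈ nbrs g x := mem_nbrs.2 hmem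
  have hyEx : y ∉ (nbrs g x).erase y := Finset.notMem_erase _ _
  have hNx : nbrs g x = insert y ((nbrs g x).erase y) := (Finset.insert_erase hyNx).symm
  rw [insM_single_single, insM_ins]
  conv_lhs => rw [hNx]
  refine Eq.trans (sum_insert_reindex hyEx V
    (fun t => ins V' y (delG g x ∪ h ∪ t) k)) ?_
  refine Finset.sum_congr rfl fun p _ => ?_
  rw [Finset.insert_eq]
  have hya : y ≠ p.2.1 := fun hh => hyV (hh ▸ p.2.2)
  have hnb : nbrs (delG g x ∪ h ∪ ({s(y, p.2.1)} ∪ newEdges ((nbrs g x).erase y) V p.1)) y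
      = insert p.2.1 ((nbrs g y).erase x) := by
    rw [nbrs_union, nbrs_union, nbrs_union, nbrs_delG hxy, nbrs_eq_empty hhy,
      nbrs_pair hya, nbrs_newEdges_empty p.1 hyEx hyV, Finset.union_empty,
      Finset.union_empty, Finset.union_comm, ← Finset.insert_eq]
  rw [ins_congr hnb]
  have haEy : p.2.1 ∉ (nbrs g y).erase x :=
    fun hh => hVNy p.2.1 p.2.2 (Finset.mem_of_mem_erase hh)
  refine Eq.trans (sum_insert_reindex haEy V'
    (fun t => Finsupp.single
      (delG (delG g x ∪ h ∪ ({s(y, p.2.1)} ∪ newEdges ((nbrs g x).erase y) V p.1)) y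
        ∪ k ∪ t) 1)) ?_
  refine Finset.sum_congr rfl fun q _ => ?_
  congr 1
  rw [Finset.insert_eq, delG_union, delG_union, delG_union, delG_eq_self hhy,
    delG_pair_self, delG_eq_self (newEdges_notMem p.1 hyEx hyV)]
  exact union_shuffle _ _ _ _ _ _

end Key

/-- **Parallel associativity of graph insertion.** -/
theorem parallel_associativity_of_graph_insertion
    (V₁ V₂ V₃ : Finset α) (star₁ star₂ : α)
    (h12 : Disjoint V₁ V₂) (h13 : Disjoint V₁ V₃) (h23 : Disjoint V₂ V₃)
    (hstar₁ : star₁ ∈ V₁) (hstar₂ : star₂ ∈ V₁) (hne : star₁ ≠ star₂)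
    (g₁ g₂ g₃ : Finset (Sym2 α))
    (hg₁ : IsGraphOn V₁ g₁) (hg₂ : IsGraphOn V₂ g₂) (hg₃ : IsGraphOn V₃ g₃) :
    insM V₃ star₂ (insM V₂ star₁ (Finsupp.single g₁ 1) (Finsupp.single g₂ 1))
        (Finsupp.single g₃ 1)
      = insM V₂ star₁ (insM V₃ star₂ (Finsupp.single g₁ 1) (Finsupp.single g₃ 1))
          (Finsupp.single g₂ 1) := by
  have hs2V2 : star₂ ∉ V₂ := fun hh => (Finset.disjoint_left.1 h12) hstar₂ hh
  have hs1V3 : star₁ ∉ V₃ := fun hh => (Finset.disjoint_left.1 h13) hstar₁ hh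
  have hnbr1 : ∀ a ∈ V₃, a ∉ nbrs g₁ star₁ := by
    intro a ha hm
    exact (Finset.disjoint_left.1 h13)
      ((hg₁ _ (mem_nbrs.1 hm)).2 a (Sym2.mem_mk_right _ _)) ha
  have hnbr2 : ∀ a ∈ V₂, a ∉ nbrs g₁ star₂ := by
    intro a ha hm
    exact (Finset.disjoint_left.1 h12)
      ((hg₁ _ (mem_nbrs.1 hm)).2 a (Sym2.mem_mk_right _ _)) ha
  have hg2e : ∀ e ∈ g₂, star₂ ∉ e := fun e he hx => hs2V2 ((hg₂ e he).2 _ hx)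
  have hg3e : ∀ e ∈ g₃, star₁ ∉ e := fun e he hx => hs1V3 ((hg₃ e he).2 _ hx)
  by_cases hmem : s(star₁, star₂) ∈ g₁
  · have hmem' : s(star₂, star₁) ∈ g₁ := by rw [Sym2.eq_swap]; exact hmem
    rw [key_edge V₂ V₃ star₁ star₂ g₁ g₂ g₃ hne hs2V2 hnbr2 hg2e hmem,
      key_edge V₃ V₂ star₂ star₁ g₁ g₃ g₂ hne.symm hs1V3 hnbr1 hg3e hmem',
      Finset.sum_comm]
    refine Finset.sum_congr rfl fun a _ => Finset.sum_congr rfl fun b _ => ?_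
    congr 1
    rw [delG_comm g₁ star₁ star₂,
      show s(b.2.1, a.2.1) = s(a.2.1, b.2.1) from Sym2.eq_swap]
    exact union_shuffle₂ _ _ _ _ _ _
  · have hmem' : s(star₂, star₁) ∉ g₁ := fun hh => hmem (by rw [Sym2.eq_swap]; exact hh)
    rw [key_noedge V₂ V₃ star₁ star₂ g₁ g₂ g₃ hne hs2V2 hg2e hmem,
      key_noedge V₃ V₂ star₂ star₁ g₁ g₃ g₂ hne.symm hs1V3 hg3e hmem',
      Finset.sum_comm]
    refine Finset.sum_congr rfl fun a _ => Finset.sum_congr rfl fun b _ => ?_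
    congr 1
    rw [delG_comm g₁ star₁ star₂]
    exact union_shuffle₃ _ _ _ _ _
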